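/- Let p be a prime. Let R_p be the localization of the polynomial ring 𝔽_p[X] (𝔽_p = ℤ/pℤ) at the multiplicative submonoid generated by X and 1+X, and let Ω_p = (R_p, +) ⋊ ℤ², where (m, k) ∈ ℤ² acts on the additive group of R_p by multiplication by X^m (1+X)^k. Let Λ_p be the group presented by generators a, s, t and relators a^p, s t s⁻¹ t⁻¹, (t a t⁻¹) a (t a t⁻¹)⁻¹ a⁻¹, and (s a s⁻¹)⁻¹ (t a t⁻¹) a. Then the homomorphism Λ_p → Ω_p sending a to (1, (0,0)), t to (0, (1,0)) and s to (0, (0,1)) is well defined and is an isomorphism of groups. -/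

import Mathlib

namespace Baumslag

/-- The generators of `Λ_p`: `a`, `s`, `t`. -/
inductive Gen : Type
  | a : Gen
  | s : Gen
  | t : Gen
deriving DecidableEq

open Gen

/-- The relators of Baumslag's group
`Λ_p = ⟨a, s, t | aᵖ, [s,t], [tat⁻¹, a], sas⁻¹ = (tat⁻¹)a⟩`. -/
def LamRel (p : ℕ) : Set (FreeGroup Gen) :=
  { FreeGroup.of a ^ p,
    FreeGroup.of s * FreeGroup.of t * (FreeGroup.of s)⁻¹ * (FreeGroup.of t)⁻¹,
    (FreeGroup.of t * FreeGroup.of a * (FreeGroup.of t)⁻¹) * FreeGroup.of a *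
      (FreeGroup.of t * FreeGroup.of a * (FreeGroup.of t)⁻¹)⁻¹ * (FreeGroup.of a)⁻¹,
    (FreeGroup.of s * FreeGroup.of a * (FreeGroup.of s)⁻¹)⁻¹ *
      (FreeGroup.of t * FreeGroup.of a * (FreeGroup.of t)⁻¹) * FreeGroup.of a }

/-- Baumslag's finitely presented metabelian group `Λ_p`. -/
def Lam (p : ℕ) : Type := PresentedGroup (LamRel p)

instance (p : ℕ) : Group (Lam p) := by unfold Lam; infer_instance

end Baumslag

namespace Baumslag

/-- The multiplicative submonoid of `𝔽_p[X]` generated by `X` and `1+X`. -/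
noncomputable def Msub (p : ℕ) : Submonoid (Polynomial (ZMod p)) :=
  Submonoid.closure {Polynomial.X, 1 + Polynomial.X}

/-- `R_p = 𝔽_p[X, X⁻¹, (1+X)⁻¹]`, the localization of `𝔽_p[X]` at the
multiplicative submonoid generated by `X` and `1+X`. -/
abbrev Rp (p : ℕ) : Type := Localization (Msub p)

/-- `X`, as a unit of `R_p`. -/
noncomputable def uX (p : ℕ) : (Rp p)ˣ :=
  (IsLocalization.map_units (M := Msub p) (Rp p)
    ⟨Polynomial.X, Submonoid.subset_closure (Set.mem_insert _ _)⟩).unit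

/-- `1 + X`, as a unit of `R_p`. -/
noncomputable def uY (p : ℕ) : (Rp p)ˣ :=
  (IsLocalization.map_units (M := Msub p) (Rp p)
    ⟨1 + Polynomial.X, Submonoid.subset_closure (Set.mem_insert_iff.2 (Or.inr rfl))⟩).unit

/-- `(m, k) ↦ Xᵐ (1+X)ᵏ`, as a homomorphism `ℤ² → (R_p)ˣ`. -/
noncomputable def psiOm (p : ℕ) : Multiplicative (ℤ × ℤ) →* (Rp p)ˣ where
  toFun g := uX p ^ (Multiplicative.toAdd g).1 * uY p ^ (Multiplicative.toAdd g).2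
  map_one' := by simp
  map_mul' g h := by
    show uX p ^ ((Multiplicative.toAdd g).1 + (Multiplicative.toAdd h).1) *
        uY p ^ ((Multiplicative.toAdd g).2 + (Multiplicative.toAdd h).2) =
      uX p ^ (Multiplicative.toAdd g).1 * uY p ^ (Multiplicative.toAdd g).2 *
        (uX p ^ (Multiplicative.toAdd h).1 * uY p ^ (Multiplicative.toAdd h).2)
    rw [zpow_add, zpow_add]
    exact mul_mul_mul_comm (uX p ^ (Multiplicative.toAdd g).1)
      (uX p ^ (Multiplicative.toAdd h).1) (uY p ^ (Multiplicative.toAdd g).2)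
      (uY p ^ (Multiplicative.toAdd h).2)

/-- The action of `ℤ²` on the additive group of `R_p`, where `(m, k)` acts by
multiplication by `Xᵐ (1+X)ᵏ`. -/
noncomputable def phiOm (p : ℕ) :
    Multiplicative (ℤ × ℤ) →* MulAut (Multiplicative (Rp p)) where
  toFun g := AddEquiv.toMultiplicative
    ((DistribMulAction.toAddAut (Rp p)ˣ (Rp p)) (psiOm p g))
  map_one' := by ext x; simp
  map_mul' g h := by ext x; simp only [map_mul]; rfl

/-- The group `Ω_p = R_p ⋊ ℤ²`. -/
noncomputable abbrev Omega (p : ℕ) : Type :=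
  SemidirectProduct (Multiplicative (Rp p)) (Multiplicative (ℤ × ℤ)) (phiOm p)

end Baumslag


namespace Baumslag
namespace B15

open Gen

variable {p : ℕ}

/-- `a` as an element of `Λ_p`. -/
def A (p : ℕ) : Lam p := PresentedGroup.of Gen.a
/-- `s` as an element of `Λ_p`. -/
def S (p : ℕ) : Lam p := PresentedGroup.of Gen.s
/-- `t` as an element of `Λ_p`. -/
def T (p : ℕ) : Lam p := PresentedGroup.of Gen.t

theorem rel_one {r : FreeGroup Gen} (hr : r ∈ LamRel p) :
    PresentedGroup.mk (LamRel p) r = 1 :=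
  (QuotientGroup.eq_one_iff _).2 (Subgroup.subset_normalClosure hr)

theorem hApow : (A p) ^ p = 1 := by
  have h := rel_one (p := p) (r := FreeGroup.of Gen.a ^ p) (Set.mem_insert _ _)
  rw [map_pow] at h
  exact h

open scoped commutatorElement in
theorem comm_TS : Commute (T p) (S p) := by
  have h := rel_one (p := p)
    (r := FreeGroup.of Gen.s * FreeGroup.of Gen.t * (FreeGroup.of Gen.s)⁻¹ *
      (FreeGroup.of Gen.t)⁻¹)
    (Set.mem_insert_iff.2 (Or.inr (Set.mem_insert _ _)))
  simp only [map_mul, map_inv] at h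
  have h' : ⁅S p, T p⁆ = 1 := h
  exact (commutatorElement_eq_one_iff_commute.1 h').symm

open scoped commutatorElement in
theorem hTA : Commute (T p * A p * (T p)⁻¹) (A p) := by
  have h := rel_one (p := p)
    (r := (FreeGroup.of Gen.t * FreeGroup.of Gen.a * (FreeGroup.of Gen.t)⁻¹) * FreeGroup.of Gen.a *
      (FreeGroup.of Gen.t * FreeGroup.of Gen.a * (FreeGroup.of Gen.t)⁻¹)⁻¹ * (FreeGroup.of Gen.a)⁻¹)
    (Set.mem_insert_iff.2 (Or.inr (Set.mem_insert_iff.2 (Or.inr (Set.mem_insert _ _)))))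
  simp only [map_mul, map_inv] at h
  have h' : ⁅T p * A p * (T p)⁻¹, A p⁆ = 1 := h
  exact commutatorElement_eq_one_iff_commute.1 h'

theorem hSA : S p * A p * (S p)⁻¹ = (T p * A p * (T p)⁻¹) * A p := by
  have h := rel_one (p := p)
    (r := (FreeGroup.of Gen.s * FreeGroup.of Gen.a * (FreeGroup.of Gen.s)⁻¹)⁻¹ *
      (FreeGroup.of Gen.t * FreeGroup.of Gen.a * (FreeGroup.of Gen.t)⁻¹) * FreeGroup.of Gen.a)
    (Set.mem_insert_iff.2 (Or.inr (Set.mem_insert_iff.2 (Or.inr (Set.mem_insert_iff.2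
      (Or.inr rfl))))))
  simp only [map_mul, map_inv] at h
  have h' : (S p * A p * (S p)⁻¹)⁻¹ * ((T p * A p * (T p)⁻¹) * A p) = 1 := by
    rw [← mul_assoc]; exact h
  exact inv_mul_eq_one.mp h'

end B15
end Baumslag

namespace Baumslag
namespace B15

variable {p : ℕ}

/-- `tᵐ sᵏ`. -/
def cel (p : ℕ) (m k : ℤ) : Lam p := T p ^ m * S p ^ k

/-- The conjugate `tᵐ sᵏ a s⁻ᵏ t⁻ᵐ`. -/
def al (p : ℕ) (m k : ℤ) : Lam p := cel p m k * A p * (cel p m k)⁻¹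

theorem al_zero_zero : al p 0 0 = A p := by simp [al, cel]

theorem al_one_zero : al p 1 0 = T p * A p * (T p)⁻¹ := by simp [al, cel]

theorem cel_T_mul (j m k : ℤ) : T p ^ j * cel p m k = cel p (m + j) k := by
  rw [cel, cel, ← mul_assoc, ← zpow_add, add_comm]

theorem cel_S_mul (j m k : ℤ) : S p ^ j * cel p m k = cel p m (k + j) := by
  rw [cel, cel, ← mul_assoc, ((comm_TS (p := p)).symm.zpow_zpow j m).eq, mul_assoc, ← zpow_add,
    add_comm]

theorem al_tconj (j m k : ℤ) : T p ^ j * al p m k * (T p ^ j)⁻¹ = al p (m + j) k := by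
  rw [al, al, ← cel_T_mul j m k]
  group

theorem al_sconj (j m k : ℤ) : S p ^ j * al p m k * (S p ^ j)⁻¹ = al p m (k + j) := by
  rw [al, al, ← cel_S_mul j m k]
  group

theorem al_tconj1 (m k : ℤ) : T p * al p m k * (T p)⁻¹ = al p (m + 1) k := by
  simpa using al_tconj 1 m k

theorem al_sconj1 (m k : ℤ) : S p * al p m k * (S p)⁻¹ = al p m (k + 1) := by
  simpa using al_sconj 1 m k

theorem cel_mul_T (m k : ℤ) : cel p m k * T p = cel p (m + 1) k := by
  rw [cel, cel, mul_assoc, ((comm_TS (p := p)).symm.zpow_left k).eq, ← mul_assoc, ← zpow_add_one]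

theorem cel_mul_S (m k : ℤ) : cel p m k * S p = cel p m (k + 1) := by
  rw [cel, cel, mul_assoc, ← zpow_add_one]

/-- The key consequence of the last relator: `α_{m,k+1} = α_{m+1,k} · α_{m,k}`. -/
theorem al_F2 (m k : ℤ) : al p m (k + 1) = al p (m + 1) k * al p m k := by
  have h1 : al p m (k + 1) = cel p m k * (S p * A p * (S p)⁻¹) * (cel p m k)⁻¹ := by
    rw [al, ← cel_mul_S m k]; group
  rw [h1, hSA]
  have h2 : al p (m + 1) k = cel p m k * (T p * A p * (T p)⁻¹) * (cel p m k)⁻¹ := by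
    rw [al, ← cel_mul_T m k]; group
  rw [h2, al]
  group

/-- Conjugation preserves commutativity. -/
theorem commute_conj {x y : Lam p} (g : Lam p) (h : Commute x y) :
    Commute (g * x * g⁻¹) (g * y * g⁻¹) := by
  simpa [MulAut.conj_apply] using h.map (MulAut.conj g)

theorem commAll0 : ∀ d : ℕ, Commute (al p (d : ℤ) 0) (al p 0 0) := by
  intro d
  induction d using Nat.strong_induction_on with
  | _ d ih =>
    match d with
    | 0 => exact Commute.refl _
    | 1 => simpa [al_one_zero, al_zero_zero] using hTA (p := p)
    | (e + 2) =>
      have casts2 : ((e + 2 : ℕ) : ℤ) = (e : ℤ) + 2 := by push_cast; ring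
      rw [casts2]
      -- notation
      set u := al p ((e : ℤ) + 2) 0 with hu
      set v := al p ((e : ℤ) + 1) 0 with hv
      set x := al p 1 0 with hx
      set y := al p 0 0 with hy
      have casts1 : ((e + 1 : ℕ) : ℤ) = (e : ℤ) + 1 := by push_cast; ring
      have ihe : Commute (al p (e : ℤ) 0) y := ih e (by omega)
      have ihe1 : Commute v y := by
        have := ih (e + 1) (by omega); rwa [casts1] at this
      -- shifts by conjugation with T
      have hvx : Commute v x := by
        have h := commute_conj (T p) ihe
        rwa [al_tconj1, al_tconj1, zero_add] at h
      have hux : Commute u x := by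
        have h := commute_conj (T p) ihe1
        rwa [al_tconj1, al_tconj1, zero_add, add_assoc] at h
      have hvy : Commute v y := ihe1
      -- conjugate ihe1 by S and use al_F2
      have h2 : Commute (al p ((e : ℤ) + 1) 1) (al p 0 1) := by
        have h := commute_conj (S p) ihe1
        rwa [al_sconj1, al_sconj1, zero_add] at h
      rw [show (1 : ℤ) = 0 + 1 by ring, al_F2, al_F2] at h2
      simp only [zero_add] at h2
      rw [show (e : ℤ) + 1 + 1 = (e : ℤ) + 2 by ring] at h2
      -- h2 : Commute (u * v) (x * y)
      have h3 : u * v * (x * y) = x * y * (u * v) := h2.eq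
      have hc : Commute (u * v) x := hux.mul_left hvx
      have h5 : u * v * y = y * (u * v) := by
        apply mul_left_cancel (a := x)
        calc x * (u * v * y) = (u * v) * x * y := by rw [← mul_assoc, ← hc.eq]
          _ = x * y * (u * v) := by rw [mul_assoc]; exact h3
          _ = x * (y * (u * v)) := by rw [mul_assoc]
      show Commute u y
      have h7 : u * y * v = y * u * v := by
        calc u * y * v = u * (v * y) := by rw [hvy.eq, ← mul_assoc]
          _ = y * (u * v) := by rw [← mul_assoc]; exact h5
          _ = y * u * v := by rw [mul_assoc]
      exact mul_right_cancel h7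

theorem commAllInt (i j : ℤ) : Commute (al p i 0) (al p j 0) := by
  have key : ∀ i j : ℤ, j ≤ i → Commute (al p i 0) (al p j 0) := by
    intro i j hij
    obtain ⟨n, hn⟩ := Int.le.dest hij
    have h0 : Commute (al p (n : ℤ) 0) (al p 0 0) := commAll0 n
    have h := commute_conj (T p ^ j) h0
    rw [al_tconj, al_tconj, zero_add] at h
    rwa [show (n : ℤ) + j = i by omega] at h
  rcases le_total j i with h | h
  · exact key i j h
  · exact (key j i h).symm

/-- The subgroup generated by the `α_{i,0}`. -/
def M0 (p : ℕ) : Subgroup (Lam p) := Subgroup.closure (Set.range fun i : ℤ => al p i 0)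

theorem M0_comm : ∀ x ∈ M0 p, ∀ y ∈ M0 p, Commute x y := by
  intro x hx y hy
  induction hx, hy using Subgroup.closure_induction₂ with
  | mem a b ha hb =>
    obtain ⟨i, rfl⟩ := ha; obtain ⟨j, rfl⟩ := hb; exact commAllInt i j
  | one_left b hb => exact Commute.one_left _
  | one_right a ha => exact Commute.one_right _
  | mul_left a b c ha hb hc h1 h2 => exact h1.mul_left h2
  | mul_right a b c ha hb hc h1 h2 => exact h1.mul_right h2
  | inv_left a b ha hb h => exact h.inv_left
  | inv_right a b ha hb h => exact h.inv_right

theorem al_mem_M0 (m : ℤ) (d : ℕ) : al p m (d : ℤ) ∈ M0 p := by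
  induction d generalizing m with
  | zero => exact Subgroup.subset_closure ⟨m, rfl⟩
  | succ e ih =>
    have : ((e + 1 : ℕ) : ℤ) = (e : ℤ) + 1 := by push_cast; ring
    rw [this, al_F2]
    exact mul_mem (ih (m + 1)) (ih m)

theorem commAA (m k m' k' : ℤ) : Commute (al p m k) (al p m' k') := by
  have key : ∀ m k m' k' : ℤ, k ≤ k' → Commute (al p m k) (al p m' k') := by
    intro m k m' k' hk
    obtain ⟨e, he⟩ := Int.le.dest hk
    have h0 : Commute (al p m 0) (al p m' (e : ℤ)) :=
      M0_comm _ (al_mem_M0 m 0) _ (al_mem_M0 m' e)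
    have h := commute_conj (S p ^ k) h0
    rw [al_sconj, al_sconj, zero_add] at h
    rwa [show (e : ℤ) + k = k' by omega] at h
  rcases le_total k k' with h | h
  · exact key m k m' k' h
  · exact (key m' k' m k h).symm

end B15
end Baumslag

namespace Baumslag
namespace B15

variable {p : ℕ}

/-- The subgroup of `Λ_p` generated by all the conjugates `α_{m,k}`. -/
def NN (p : ℕ) : Subgroup (Lam p) :=
  Subgroup.closure (Set.range fun q : ℤ × ℤ => al p q.1 q.2)

theorem al_mem_NN (m k : ℤ) : al p m k ∈ NN p :=
  Subgroup.subset_closure ⟨(m, k), rfl⟩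

theorem A_mem_NN : A p ∈ NN p := by rw [← al_zero_zero]; exact al_mem_NN 0 0

theorem NN_comm : ∀ x ∈ NN p, ∀ y ∈ NN p, Commute x y := by
  intro x hx y hy
  induction hx, hy using Subgroup.closure_induction₂ with
  | mem a b ha hb =>
    obtain ⟨i, rfl⟩ := ha; obtain ⟨j, rfl⟩ := hb; exact commAA i.1 i.2 j.1 j.2
  | one_left b hb => exact Commute.one_left _
  | one_right a ha => exact Commute.one_right _
  | mul_left a b c ha hb hc h1 h2 => exact h1.mul_left h2
  | mul_right a b c ha hb hc h1 h2 => exact h1.mul_right h2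
  | inv_left a b ha hb h => exact h.inv_left
  | inv_right a b ha hb h => exact h.inv_right

instance instCommGroupNN : CommGroup ↥(NN p) :=
  { (inferInstance : Group ↥(NN p)) with
    mul_comm := fun x y => Subtype.ext ((NN_comm _ x.2 _ y.2).eq) }

theorem NN_pow_p : ∀ x ∈ NN p, x ^ p = 1 := by
  intro x hx
  induction hx using Subgroup.closure_induction with
  | mem a ha =>
    obtain ⟨q, rfl⟩ := ha
    simp only [al]
    have : (cel p q.1 q.2 * A p * (cel p q.1 q.2)⁻¹) ^ p
        = cel p q.1 q.2 * A p ^ p * (cel p q.1 q.2)⁻¹ := by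
      rw [conj_pow]
    rw [this, hApow]; group
  | one => rw [one_pow]
  | mul a b ha hb iha ihb =>
    rw [(NN_comm _ ha _ hb).mul_pow, iha, ihb, one_mul]
  | inv a ha iha => rw [inv_pow, iha, inv_one]

theorem conj_mem_NN {g : Lam p} (hg : ∀ q : ℤ × ℤ, g * al p q.1 q.2 * g⁻¹ ∈ NN p) :
    ∀ x ∈ NN p, g * x * g⁻¹ ∈ NN p := by
  intro x hx
  induction hx using Subgroup.closure_induction with
  | mem a ha => obtain ⟨q, rfl⟩ := ha; exact hg q
  | one => simpa using one_mem (NN p)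
  | mul a b ha hb iha ihb =>
    have : g * (a * b) * g⁻¹ = (g * a * g⁻¹) * (g * b * g⁻¹) := by group
    rw [this]; exact mul_mem iha ihb
  | inv a ha iha =>
    have : g * a⁻¹ * g⁻¹ = (g * a * g⁻¹)⁻¹ := by group
    rw [this]; exact inv_mem iha

theorem T_conj_mem_NN : ∀ x ∈ NN p, T p * x * (T p)⁻¹ ∈ NN p :=
  conj_mem_NN fun q => by rw [al_tconj1]; exact al_mem_NN _ _

theorem Tinv_conj_mem_NN : ∀ x ∈ NN p, (T p)⁻¹ * x * ((T p)⁻¹)⁻¹ ∈ NN p :=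
  conj_mem_NN fun q => by
    have := al_tconj (p := p) (-1) q.1 q.2
    rw [zpow_neg_one] at this
    rw [this]; exact al_mem_NN _ _

theorem S_conj_mem_NN : ∀ x ∈ NN p, S p * x * (S p)⁻¹ ∈ NN p :=
  conj_mem_NN fun q => by rw [al_sconj1]; exact al_mem_NN _ _

theorem Sinv_conj_mem_NN : ∀ x ∈ NN p, (S p)⁻¹ * x * ((S p)⁻¹)⁻¹ ∈ NN p :=
  conj_mem_NN fun q => by
    have := al_sconj (p := p) (-1) q.1 q.2
    rw [zpow_neg_one] at this
    rw [this]; exact al_mem_NN _ _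

/-- Restriction of conjugation by `g` to the subgroup `NN`. -/
def cres (g : Lam p) (hg : ∀ x ∈ NN p, g * x * g⁻¹ ∈ NN p) : ↥(NN p) →* ↥(NN p) where
  toFun x := ⟨g * x * g⁻¹, hg x x.2⟩
  map_one' := Subtype.ext (by simp)
  map_mul' x y := Subtype.ext (by
    show g * (↑x * ↑y) * g⁻¹ = (g * ↑x * g⁻¹) * (g * ↑y * g⁻¹)
    group)

def tauRes (p : ℕ) : ↥(NN p) →* ↥(NN p) := cres (T p) T_conj_mem_NN
def tauInvRes (p : ℕ) : ↥(NN p) →* ↥(NN p) := cres (T p)⁻¹ Tinv_conj_mem_NN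
def sigRes (p : ℕ) : ↥(NN p) →* ↥(NN p) := cres (S p) S_conj_mem_NN
def sigInvRes (p : ℕ) : ↥(NN p) →* ↥(NN p) := cres (S p)⁻¹ Sinv_conj_mem_NN

/-- The key structural identity: conjugation by `s` equals "multiplication by `1 + X`",
i.e. `σ(x) = τ(x) · x` on `NN`. -/
theorem sig_eq_tau_mul : ∀ x ∈ NN p, S p * x * (S p)⁻¹ = (T p * x * (T p)⁻¹) * x := by
  intro x hx
  induction hx using Subgroup.closure_induction with
  | mem a ha =>
    obtain ⟨q, rfl⟩ := ha
    rw [al_sconj1, al_tconj1, al_F2]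
  | one => simp
  | mul a b ha hb iha ihb =>
    have hcomm : Commute a (T p * b * (T p)⁻¹) :=
      NN_comm _ ha _ (T_conj_mem_NN b hb)
    calc S p * (a * b) * (S p)⁻¹
        = (S p * a * (S p)⁻¹) * (S p * b * (S p)⁻¹) := by group
      _ = ((T p * a * (T p)⁻¹) * a) * ((T p * b * (T p)⁻¹) * b) := by rw [iha, ihb]
      _ = (T p * a * (T p)⁻¹) * (a * (T p * b * (T p)⁻¹)) * b := by
          simp only [mul_assoc]
      _ = (T p * a * (T p)⁻¹) * ((T p * b * (T p)⁻¹) * a) * b := by rw [hcomm.eq]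
      _ = ((T p * a * (T p)⁻¹) * (T p * b * (T p)⁻¹)) * (a * b) := by
          simp only [mul_assoc]
      _ = (T p * (a * b) * (T p)⁻¹) * (a * b) := by group
  | inv a ha iha =>
    have hcomm : Commute a⁻¹ (T p * a⁻¹ * (T p)⁻¹) :=
      NN_comm _ (inv_mem ha) _ (T_conj_mem_NN _ (inv_mem ha))
    have h1 : S p * a⁻¹ * (S p)⁻¹ = (S p * a * (S p)⁻¹)⁻¹ := by group
    rw [h1, iha]
    rw [mul_inv_rev]
    have h2 : (T p * a * (T p)⁻¹)⁻¹ = T p * a⁻¹ * (T p)⁻¹ := by group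
    rw [h2]
    exact hcomm.eq

end B15
end Baumslag

namespace Baumslag
namespace B15

variable {p : ℕ}

set_option maxHeartbeats 1000000
set_option synthInstance.maxHeartbeats 400000

noncomputable instance instModNN (p : ℕ) : Module (ZMod p) (Additive ↥(NN p)) :=
  AddCommGroup.zmodModule (fun x => by
    have h : (Additive.toMul x : ↥(NN p)) ^ p = 1 :=
      Subtype.ext (NN_pow_p (Additive.toMul x : ↥(NN p)).1 (Additive.toMul x).2)
    apply Additive.toMul.injective
    simpa using h)

attribute [irreducible] instModNN

/-- A monoid endomorphism of `NN` as a `ZMod p`-linear endomorphism of `Additive NN`. -/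
def lin (f : ↥(NN p) →* ↥(NN p)) : Module.End (ZMod p) (Additive ↥(NN p)) where
  toFun := MonoidHom.toAdditive f
  map_add' x y := map_add _ x y
  map_smul' c x := by simpa using ZMod.map_smul (MonoidHom.toAdditive f) c x

noncomputable def tauLin (p : ℕ) : Module.End (ZMod p) (Additive ↥(NN p)) := lin (tauRes p)
noncomputable def tauInvLin (p : ℕ) : Module.End (ZMod p) (Additive ↥(NN p)) := lin (tauInvRes p)
noncomputable def sigLin (p : ℕ) : Module.End (ZMod p) (Additive ↥(NN p)) := lin (sigRes p)
noncomputable def sigInvLin (p : ℕ) : Module.End (ZMod p) (Additive ↥(NN p)) := lin (sigInvRes p)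

theorem NNext {x y : Additive ↥(NN p)}
    (h : ((Additive.toMul x : ↥(NN p)) : Lam p) = ((Additive.toMul y : ↥(NN p)) : Lam p)) :
    x = y :=
  Additive.toMul.injective (Subtype.ext h)

theorem tauLin_mul_tauInvLin : tauLin p * tauInvLin p = 1 := by
  apply LinearMap.ext; intro x
  apply NNext
  show T p * ((T p)⁻¹ * ((Additive.toMul x : ↥(NN p)) : Lam p) * ((T p)⁻¹)⁻¹) * (T p)⁻¹
      = ((Additive.toMul x : ↥(NN p)) : Lam p)
  group

theorem tauInvLin_mul_tauLin : tauInvLin p * tauLin p = 1 := by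
  apply LinearMap.ext; intro x
  apply NNext
  show (T p)⁻¹ * (T p * ((Additive.toMul x : ↥(NN p)) : Lam p) * (T p)⁻¹) * ((T p)⁻¹)⁻¹
      = ((Additive.toMul x : ↥(NN p)) : Lam p)
  group

theorem sigLin_mul_sigInvLin : sigLin p * sigInvLin p = 1 := by
  apply LinearMap.ext; intro x
  apply NNext
  show S p * ((S p)⁻¹ * ((Additive.toMul x : ↥(NN p)) : Lam p) * ((S p)⁻¹)⁻¹) * (S p)⁻¹
      = ((Additive.toMul x : ↥(NN p)) : Lam p)
  group

theorem sigInvLin_mul_sigLin : sigInvLin p * sigLin p = 1 := by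
  apply LinearMap.ext; intro x
  apply NNext
  show (S p)⁻¹ * (S p * ((Additive.toMul x : ↥(NN p)) : Lam p) * (S p)⁻¹) * ((S p)⁻¹)⁻¹
      = ((Additive.toMul x : ↥(NN p)) : Lam p)
  group

/-- `σ = 1 + τ` as linear endomorphisms. -/
theorem sigLin_eq_one_add_tauLin : sigLin p = 1 + tauLin p := by
  apply LinearMap.ext; intro x
  apply NNext
  have h := sig_eq_tau_mul ((Additive.toMul x : ↥(NN p)) : Lam p) (Additive.toMul x).2
  show S p * ((Additive.toMul x : ↥(NN p)) : Lam p) * (S p)⁻¹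
      = ((Additive.toMul x : ↥(NN p)) : Lam p) *
        (T p * ((Additive.toMul x : ↥(NN p)) : Lam p) * (T p)⁻¹)
  rw [h]
  exact (NN_comm _ (Additive.toMul x).2 _
    (T_conj_mem_NN _ (Additive.toMul x).2)).eq.symm

/-- Commutation of the basic endomorphisms: they come from commuting conjugations. -/
theorem conj_comm_elem {g h : Lam p} (hc : g * h = h * g) (x : Lam p) :
    g * (h * x * h⁻¹) * g⁻¹ = h * (g * x * g⁻¹) * h⁻¹ := by
  have e1 : g * (h * x * h⁻¹) * g⁻¹ = (g * h) * x * (g * h)⁻¹ := by group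
  have e2 : h * (g * x * g⁻¹) * h⁻¹ = (h * g) * x * (h * g)⁻¹ := by group
  rw [e1, e2, hc]

theorem tauLin_comm_tauInvLin : tauLin p * tauInvLin p = tauInvLin p * tauLin p := by
  rw [tauLin_mul_tauInvLin, tauInvLin_mul_tauLin]

theorem tauLin_comm_sigInvLin : tauLin p * sigInvLin p = sigInvLin p * tauLin p := by
  apply LinearMap.ext; intro x
  apply NNext
  exact conj_comm_elem ((comm_TS (p := p)).inv_right.eq) _

theorem tauInvLin_comm_sigInvLin : tauInvLin p * sigInvLin p = sigInvLin p * tauInvLin p := by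
  apply LinearMap.ext; intro x
  apply NNext
  exact conj_comm_elem ((comm_TS (p := p)).inv_inv.eq) _

/-- The commutative subalgebra of `End(N)` generated by `τ`, `τ⁻¹` and `σ⁻¹`. -/
noncomputable def CcS (p : ℕ) : Subalgebra (ZMod p) (Module.End (ZMod p) (Additive ↥(NN p))) :=
  Algebra.adjoin (ZMod p) {tauLin p, tauInvLin p, sigInvLin p}

noncomputable def ccCommRing (p : ℕ) : CommRing ↥(CcS p) :=
  Algebra.adjoinCommRingOfComm (ZMod p) (by
    intro a ha b hb
    rcases ha with rfl | rfl | rfl <;> rcases hb with rfl | rfl | rfl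
    · rfl
    · exact tauLin_comm_tauInvLin
    · exact tauLin_comm_sigInvLin
    · exact tauLin_comm_tauInvLin.symm
    · rfl
    · exact tauInvLin_comm_sigInvLin
    · exact tauLin_comm_sigInvLin.symm
    · exact tauInvLin_comm_sigInvLin.symm
    · rfl)

theorem tauLin_mem_CcS : tauLin p ∈ CcS p :=
  Algebra.subset_adjoin (Set.mem_insert _ _)
theorem tauInvLin_mem_CcS : tauInvLin p ∈ CcS p :=
  Algebra.subset_adjoin (Set.mem_insert_iff.2 (Or.inr (Set.mem_insert _ _)))
theorem sigInvLin_mem_CcS : sigInvLin p ∈ CcS p :=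
  Algebra.subset_adjoin (Set.mem_insert_iff.2 (Or.inr (Set.mem_insert_iff.2 (Or.inr rfl))))
theorem sigLin_mem_CcS : sigLin p ∈ CcS p := by
  rw [sigLin_eq_one_add_tauLin]
  exact add_mem (one_mem _) tauLin_mem_CcS

/-- A type synonym for the commutative subalgebra, carrying clean instances. -/
def CcT (p : ℕ) : Type := ↥(CcS p)

noncomputable instance instCommRingCcT (p : ℕ) : CommRing (CcT p) := ccCommRing p

noncomputable instance instAlgebraCcT (p : ℕ) : Algebra (ZMod p) (CcT p) :=
  (CcS p).algebra

/-- Constructor for elements of `CcT`. -/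
noncomputable def mkC (p : ℕ) (e : Module.End (ZMod p) (Additive ↥(NN p))) (he : e ∈ CcS p) :
    CcT p := ⟨e, he⟩

/-- The inclusion of `CcT` into the endomorphism ring. -/
noncomputable def valHom (p : ℕ) : CcT p →+* Module.End (ZMod p) (Additive ↥(NN p)) where
  toFun x := (show ↥(CcS p) from x).1
  map_one' := rfl
  map_mul' _ _ := rfl
  map_zero' := rfl
  map_add' _ _ := rfl

theorem valHom_mkC (e : Module.End (ZMod p) (Additive ↥(NN p))) (he : e ∈ CcS p) :
    valHom p (mkC p e he) = e := rfl

theorem valHom_injective : Function.Injective (valHom p) := fun x y h => Subtype.ext h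

/-- Evaluation of polynomials at `τ`, inside the commutative subalgebra. -/
noncomputable def phiP (p : ℕ) : Polynomial (ZMod p) →+* CcT p :=
  (Polynomial.aeval (mkC p (tauLin p) tauLin_mem_CcS)).toRingHom

theorem phiP_X : phiP p Polynomial.X = mkC p (tauLin p) tauLin_mem_CcS := by
  simp [phiP]

theorem valHom_phiP_X : valHom p (phiP p Polynomial.X) = tauLin p := by
  rw [phiP_X, valHom_mkC]

theorem valHom_phiP_one_add_X : valHom p (phiP p (1 + Polynomial.X)) = sigLin p := by
  rw [map_add, map_one, map_add, map_one, valHom_phiP_X]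
  exact (sigLin_eq_one_add_tauLin (p := p)).symm

theorem phiP_units : ∀ y : Msub p, IsUnit (phiP p (y : Polynomial (ZMod p))) := by
  rintro ⟨y, hy⟩
  induction hy using Submonoid.closure_induction with
  | mem a ha =>
    rcases ha with rfl | rfl
    · refine ⟨⟨phiP p Polynomial.X, mkC p (tauInvLin p) tauInvLin_mem_CcS, ?_, ?_⟩, rfl⟩
      · apply valHom_injective
        rw [map_mul, valHom_phiP_X, valHom_mkC, map_one]
        exact tauLin_mul_tauInvLin
      · apply valHom_injective
        rw [map_mul, valHom_phiP_X, valHom_mkC, map_one]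
        exact tauInvLin_mul_tauLin
    · refine ⟨⟨phiP p (1 + Polynomial.X), mkC p (sigInvLin p) sigInvLin_mem_CcS, ?_, ?_⟩, rfl⟩
      · apply valHom_injective
        rw [map_mul, valHom_phiP_one_add_X, valHom_mkC, map_one]
        exact sigLin_mul_sigInvLin
      · apply valHom_injective
        rw [map_mul, valHom_phiP_one_add_X, valHom_mkC, map_one]
        exact sigInvLin_mul_sigLin
  | one => rw [map_one]; exact isUnit_one
  | mul a b ha hb iha ihb => rw [map_mul]; exact iha.mul ihb

/-- The lift of `phiP` to the localization `R_p`. -/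
noncomputable def liftCc (p : ℕ) : Rp p →+* CcT p :=
  IsLocalization.lift (M := Msub p) (S := Rp p) phiP_units

theorem liftCc_algebraMap (q : Polynomial (ZMod p)) :
    liftCc p (algebraMap (Polynomial (ZMod p)) (Rp p) q) = phiP p q :=
  IsLocalization.lift_eq phiP_units q

/-- The action of `R_p` on `Additive NN`, as a ring homomorphism to the endomorphism ring. -/
noncomputable def rhoHom (p : ℕ) : Rp p →+* Module.End (ZMod p) (Additive ↥(NN p)) :=
  (valHom p).comp (liftCc p)

theorem rhoHom_algebraMap (q : Polynomial (ZMod p)) :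
    rhoHom p (algebraMap (Polynomial (ZMod p)) (Rp p) q) = valHom p (phiP p q) := by
  rw [rhoHom, RingHom.comp_apply, liftCc_algebraMap]

theorem rhoHom_uX : rhoHom p ((uX p : (Rp p)ˣ) : Rp p) = tauLin p := by
  have h : ((uX p : (Rp p)ˣ) : Rp p)
      = algebraMap (Polynomial (ZMod p)) (Rp p) Polynomial.X := rfl
  rw [h, rhoHom_algebraMap, valHom_phiP_X]

theorem rhoHom_uY : rhoHom p ((uY p : (Rp p)ˣ) : Rp p) = sigLin p := by
  have h : ((uY p : (Rp p)ˣ) : Rp p)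
      = algebraMap (Polynomial (ZMod p)) (Rp p) (1 + Polynomial.X) := rfl
  rw [h, rhoHom_algebraMap, valHom_phiP_one_add_X]

end B15
end Baumslag

namespace Baumslag
namespace B15

variable {p : ℕ}

set_option maxHeartbeats 1000000 in
/-- `τ` as a unit of the endomorphism ring. -/
noncomputable def TUnit (p : ℕ) : (Module.End (ZMod p) (Additive ↥(NN p)))ˣ :=
  ⟨tauLin p, tauInvLin p, tauLin_mul_tauInvLin, tauInvLin_mul_tauLin⟩

/-- `σ` as a unit of the endomorphism ring. -/
noncomputable def SUnit (p : ℕ) : (Module.End (ZMod p) (Additive ↥(NN p)))ˣ :=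
  ⟨sigLin p, sigInvLin p, sigLin_mul_sigInvLin, sigInvLin_mul_sigLin⟩

theorem unitsMap_uX : Units.map (rhoHom p).toMonoidHom (uX p) = TUnit p :=
  Units.ext (by exact rhoHom_uX (p := p))

theorem unitsMap_uY : Units.map (rhoHom p).toMonoidHom (uY p) = SUnit p :=
  Units.ext (by exact rhoHom_uY (p := p))

/-- Value of an element of `NN`, as an element of `Λ_p`. -/
def nval (x : Additive ↥(NN p)) : Lam p := ((Additive.toMul x : ↥(NN p)) : Lam p)

theorem nval_injective : Function.Injective (nval (p := p)) := fun x y h =>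
  Additive.toMul.injective (Subtype.ext h)

theorem nval_tauLin (x : Additive ↥(NN p)) :
    nval (tauLin p x) = T p * nval x * (T p)⁻¹ := rfl

theorem nval_tauInvLin (x : Additive ↥(NN p)) :
    nval (tauInvLin p x) = (T p)⁻¹ * nval x * ((T p)⁻¹)⁻¹ := rfl

theorem nval_sigLin (x : Additive ↥(NN p)) :
    nval (sigLin p x) = S p * nval x * (S p)⁻¹ := rfl

theorem nval_sigInvLin (x : Additive ↥(NN p)) :
    nval (sigInvLin p x) = (S p)⁻¹ * nval x * ((S p)⁻¹)⁻¹ := rfl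

theorem nval_TUnit_zpow (m : ℤ) (x : Additive ↥(NN p)) :
    nval (((TUnit p ^ m : (Module.End (ZMod p) (Additive ↥(NN p)))ˣ) : Module.End (ZMod p) (Additive ↥(NN p))) x)
      = T p ^ m * nval x * (T p ^ m)⁻¹ := by
  induction m using Int.induction_on generalizing x with
  | zero => simp
  | succ n ih =>
    rw [zpow_add_one, Units.val_mul, Module.End.mul_apply]
    show nval ((TUnit p ^ (n : ℤ)).1 (tauLin p x)) = _
    rw [ih, nval_tauLin]
    group
  | pred n ih =>
    rw [sub_eq_add_neg, zpow_add, Units.val_mul, Module.End.mul_apply]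
    show nval ((TUnit p ^ (-n : ℤ)).1 ((TUnit p ^ (-1 : ℤ)).1 x)) = _
    have h1 : ((TUnit p ^ (-1 : ℤ)).1 x) = tauInvLin p x := by
      rw [zpow_neg_one]; rfl
    rw [h1, ih, nval_tauInvLin]
    group

theorem nval_SUnit_zpow (k : ℤ) (x : Additive ↥(NN p)) :
    nval (((SUnit p ^ k : (Module.End (ZMod p) (Additive ↥(NN p)))ˣ) : Module.End (ZMod p) (Additive ↥(NN p))) x)
      = S p ^ k * nval x * (S p ^ k)⁻¹ := by
  induction k using Int.induction_on generalizing x with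
  | zero => simp
  | succ n ih =>
    rw [zpow_add_one, Units.val_mul, Module.End.mul_apply]
    show nval ((SUnit p ^ (n : ℤ)).1 (sigLin p x)) = _
    rw [ih, nval_sigLin]
    group
  | pred n ih =>
    rw [sub_eq_add_neg, zpow_add, Units.val_mul, Module.End.mul_apply]
    show nval ((SUnit p ^ (-n : ℤ)).1 ((SUnit p ^ (-1 : ℤ)).1 x)) = _
    have h1 : ((SUnit p ^ (-1 : ℤ)).1 x) = sigInvLin p x := by
      rw [zpow_neg_one]; rfl
    rw [h1, ih, nval_sigInvLin]
    group

/-- `a` as the base point of `Additive NN`. -/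
def A0 (p : ℕ) : Additive ↥(NN p) := Additive.ofMul ⟨A p, A_mem_NN⟩

/-- The additive map `R_p → Additive NN`, `r ↦ ρ(r)(a)`. -/
noncomputable def ell (p : ℕ) : Rp p →+ Additive ↥(NN p) where
  toFun r := rhoHom p r (A0 p)
  map_zero' := by
    show rhoHom p 0 (A0 p) = 0
    rw [map_zero]; rfl
  map_add' r r' := by
    show rhoHom p (r + r') (A0 p) = rhoHom p r (A0 p) + rhoHom p r' (A0 p)
    rw [map_add]; rfl

theorem ell_one : ell p 1 = A0 p := by
  show rhoHom p 1 (A0 p) = A0 p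
  rw [map_one]
  rfl

/-- The homomorphism `Multiplicative R_p →* Λ_p`. -/
noncomputable def g1 (p : ℕ) : Multiplicative (Rp p) →* Lam p where
  toFun r := nval (ell p (Multiplicative.toAdd r))
  map_one' := by
    show nval (ell p 0) = 1
    rw [map_zero]
    rfl
  map_mul' r r' := by
    show nval (ell p (Multiplicative.toAdd r + Multiplicative.toAdd r')) = _
    rw [map_add]
    rfl

/-- The homomorphism `ℤ² →* Λ_p`, `(m,k) ↦ tᵐ sᵏ`. -/
noncomputable def g2 (p : ℕ) : Multiplicative (ℤ × ℤ) →* Lam p where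
  toFun g := cel p (Multiplicative.toAdd g).1 (Multiplicative.toAdd g).2
  map_one' := by
    show cel p 0 0 = 1
    simp [cel]
  map_mul' g h := by
    show cel p ((Multiplicative.toAdd g).1 + (Multiplicative.toAdd h).1)
        ((Multiplicative.toAdd g).2 + (Multiplicative.toAdd h).2) = _
    show _ = cel p (Multiplicative.toAdd g).1 (Multiplicative.toAdd g).2 *
        cel p (Multiplicative.toAdd h).1 (Multiplicative.toAdd h).2
    simp only [cel]
    rw [zpow_add, zpow_add,
      ((comm_TS (p := p)).zpow_zpow (Multiplicative.toAdd h).1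
        (Multiplicative.toAdd g).2).mul_mul_mul_comm]

theorem phiOm_apply (g : Multiplicative (ℤ × ℤ)) (x : Multiplicative (Rp p)) :
    phiOm p g x = Multiplicative.ofAdd
      (((psiOm p g : (Rp p)ˣ) : Rp p) * Multiplicative.toAdd x) := rfl

/-- Compatibility of `g1` with the actions. -/
theorem g_compat (g : Multiplicative (ℤ × ℤ)) :
    (g1 p).comp (phiOm p g).toMonoidHom
      = (MulAut.conj (g2 p g)).toMonoidHom.comp (g1 p) := by
  apply MonoidHom.ext; intro x
  show g1 p (phiOm p g x) = g2 p g * g1 p x * (g2 p g)⁻¹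
  rw [phiOm_apply]
  show nval (rhoHom p (((psiOm p g : (Rp p)ˣ) : Rp p) * Multiplicative.toAdd x) (A0 p)) = _
  rw [map_mul, Module.End.mul_apply]
  have hpsi : rhoHom p ((psiOm p g : (Rp p)ˣ) : Rp p)
      = ((TUnit p ^ (Multiplicative.toAdd g).1 * SUnit p ^ (Multiplicative.toAdd g).2 :
          (Module.End (ZMod p) (Additive ↥(NN p)))ˣ) : Module.End (ZMod p) (Additive ↥(NN p))) := by
    have h1 : (Units.map (rhoHom p).toMonoidHom) (psiOm p g)
        = TUnit p ^ (Multiplicative.toAdd g).1 * SUnit p ^ (Multiplicative.toAdd g).2 := by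
      have : psiOm p g = uX p ^ (Multiplicative.toAdd g).1 * uY p ^ (Multiplicative.toAdd g).2 :=
        rfl
      rw [this, map_mul, map_zpow, map_zpow, unitsMap_uX, unitsMap_uY]
    calc rhoHom p ((psiOm p g : (Rp p)ˣ) : Rp p)
        = ((Units.map (rhoHom p).toMonoidHom) (psiOm p g) : Module.End (ZMod p) (Additive ↥(NN p))) := rfl
      _ = _ := by rw [h1]
  rw [hpsi, Units.val_mul, Module.End.mul_apply, nval_TUnit_zpow, nval_SUnit_zpow]
  show _ = cel p (Multiplicative.toAdd g).1 (Multiplicative.toAdd g).2 * _ *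
      (cel p (Multiplicative.toAdd g).1 (Multiplicative.toAdd g).2)⁻¹
  rw [cel]
  group
  rfl

/-- The inverse homomorphism `Ω_p →* Λ_p`. -/
noncomputable def glift (p : ℕ) : Omega p →* Lam p :=
  SemidirectProduct.lift (g1 p) (g2 p) g_compat

theorem glift_inl (x : Multiplicative (Rp p)) :
    glift p (SemidirectProduct.inl x) = nval (ell p (Multiplicative.toAdd x)) := by
  simp [glift, g1]

theorem glift_inr (g : Multiplicative (ℤ × ℤ)) :
    glift p (SemidirectProduct.inr g)
      = cel p (Multiplicative.toAdd g).1 (Multiplicative.toAdd g).2 := by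
  simp [glift, g2]

end B15
end Baumslag

namespace Baumslag
namespace B15

open SemidirectProduct

variable {p : ℕ}

/-- The images of the generators in `Ω_p`. -/
noncomputable def fGen (p : ℕ) : Gen → Omega p
  | Gen.a => SemidirectProduct.inl (Multiplicative.ofAdd (1 : Rp p))
  | Gen.t => SemidirectProduct.inr (Multiplicative.ofAdd ((1 : ℤ), (0 : ℤ)))
  | Gen.s => SemidirectProduct.inr (Multiplicative.ofAdd ((0 : ℤ), (1 : ℤ)))

theorem psiOm_t : ((psiOm p (Multiplicative.ofAdd ((1 : ℤ), (0 : ℤ))) : (Rp p)ˣ) : Rp p)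
    = algebraMap (Polynomial (ZMod p)) (Rp p) Polynomial.X := by
  show (((uX p) ^ (1 : ℤ) * (uY p) ^ (0 : ℤ) : (Rp p)ˣ) : Rp p) = _
  rw [zpow_one, zpow_zero, mul_one]
  rfl

theorem psiOm_s : ((psiOm p (Multiplicative.ofAdd ((0 : ℤ), (1 : ℤ))) : (Rp p)ˣ) : Rp p)
    = algebraMap (Polynomial (ZMod p)) (Rp p) (1 + Polynomial.X) := by
  show (((uX p) ^ (0 : ℤ) * (uY p) ^ (1 : ℤ) : (Rp p)ˣ) : Rp p) = _
  rw [zpow_one, zpow_zero, one_mul]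
  rfl

theorem p_cast_zero : ((p : ℕ) : Rp p) = 0 := by
  have h1 : ((p : ℕ) : Polynomial (ZMod p)) = 0 := by
    rw [← map_natCast (Polynomial.C : ZMod p →+* Polynomial (ZMod p)) p,
      ZMod.natCast_self, map_zero]
  calc ((p : ℕ) : Rp p)
      = algebraMap (Polynomial (ZMod p)) (Rp p) ((p : ℕ) : Polynomial (ZMod p)) := by
        rw [map_natCast]
    _ = 0 := by rw [h1, map_zero]

open scoped commutatorElement in
theorem frels : ∀ r ∈ LamRel p, FreeGroup.lift (fGen p) r = 1 := by
  intro r hr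
  simp only [LamRel, Set.mem_insert_iff, Set.mem_singleton_iff] at hr
  rcases hr with rfl | rfl | rfl | rfl
  · -- a^p
    rw [map_pow, FreeGroup.lift_apply_of]
    show (SemidirectProduct.inl (Multiplicative.ofAdd (1 : Rp p))) ^ p = 1
    rw [← map_pow, ← ofAdd_nsmul, nsmul_eq_mul, mul_one, p_cast_zero]
    simp
  · -- [s,t]
    simp only [map_mul, map_inv, FreeGroup.lift_apply_of, fGen]
    simp only [← map_inv, ← map_mul]
    rw [show Multiplicative.ofAdd ((0 : ℤ), (1 : ℤ)) * Multiplicative.ofAdd ((1 : ℤ), (0 : ℤ))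
        * (Multiplicative.ofAdd ((0 : ℤ), (1 : ℤ)))⁻¹ * (Multiplicative.ofAdd ((1 : ℤ), (0 : ℤ)))⁻¹
        = 1 by rw [← commutatorElement_def]
               exact commutatorElement_eq_one_iff_commute.2 (Commute.all _ _)]
    rw [map_one]
  · -- [tat⁻¹, a]
    simp only [map_mul, map_inv, FreeGroup.lift_apply_of, fGen]
    have e1 : (SemidirectProduct.inr (Multiplicative.ofAdd ((1 : ℤ), (0 : ℤ))) : Omega p)
        * SemidirectProduct.inl (Multiplicative.ofAdd (1 : Rp p))
        * (SemidirectProduct.inr (Multiplicative.ofAdd ((1 : ℤ), (0 : ℤ))))⁻¹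
        = SemidirectProduct.inl ((phiOm p (Multiplicative.ofAdd ((1 : ℤ), (0 : ℤ))))
            (Multiplicative.ofAdd (1 : Rp p))) := by
      rw [show (SemidirectProduct.inr (Multiplicative.ofAdd ((1 : ℤ), (0 : ℤ))) : Omega p)⁻¹
          = SemidirectProduct.inr ((Multiplicative.ofAdd ((1 : ℤ), (0 : ℤ)))⁻¹) from
        (map_inv _ _).symm]
      rw [← SemidirectProduct.inl_aut]
    rw [e1]
    exact commutatorElement_eq_one_iff_commute.2
      ((Commute.all _ _).map (SemidirectProduct.inl : Multiplicative (Rp p) →* Omega p))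
  · -- (sas⁻¹)⁻¹ (tat⁻¹) a
    simp only [map_mul, map_inv, FreeGroup.lift_apply_of, fGen]
    have e1 : ∀ g : ℤ × ℤ, (SemidirectProduct.inr (Multiplicative.ofAdd g) : Omega p)
        * SemidirectProduct.inl (Multiplicative.ofAdd (1 : Rp p))
        * (SemidirectProduct.inr (Multiplicative.ofAdd g))⁻¹
        = SemidirectProduct.inl ((phiOm p (Multiplicative.ofAdd g))
            (Multiplicative.ofAdd (1 : Rp p))) := by
      intro g
      rw [show (SemidirectProduct.inr (Multiplicative.ofAdd g) : Omega p)⁻¹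
          = SemidirectProduct.inr ((Multiplicative.ofAdd g)⁻¹) from (map_inv _ _).symm]
      rw [← SemidirectProduct.inl_aut]
    rw [e1, e1, ← map_inv, ← map_mul, ← map_mul]
    rw [phiOm_apply, phiOm_apply]
    rw [show Multiplicative.toAdd (Multiplicative.ofAdd (1 : Rp p)) = (1 : Rp p) from rfl]
    rw [psiOm_t, psiOm_s]
    simp only [← ofAdd_neg, ← ofAdd_add]
    rw [show -(algebraMap (Polynomial (ZMod p)) (Rp p) (1 + Polynomial.X) * (1 : Rp p))
        + algebraMap (Polynomial (ZMod p)) (Rp p) Polynomial.X * (1 : Rp p) + 1 = 0 by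
      rw [map_add, map_one]; ring]
    rw [show Multiplicative.ofAdd (0 : Rp p) = 1 from rfl, map_one]

/-- The homomorphism `Λ_p →* Ω_p`. -/
noncomputable def fHom (p : ℕ) : Lam p →* Omega p := PresentedGroup.toGroup frels

theorem fHom_a : fHom p (PresentedGroup.of Gen.a)
    = SemidirectProduct.inl (Multiplicative.ofAdd (1 : Rp p)) :=
  PresentedGroup.toGroup.of frels

theorem fHom_t : fHom p (PresentedGroup.of Gen.t)
    = SemidirectProduct.inr (Multiplicative.ofAdd ((1 : ℤ), (0 : ℤ))) :=
  PresentedGroup.toGroup.of frels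

theorem fHom_s : fHom p (PresentedGroup.of Gen.s)
    = SemidirectProduct.inr (Multiplicative.ofAdd ((0 : ℤ), (1 : ℤ))) :=
  PresentedGroup.toGroup.of frels

/-- `glift` is a left inverse of `fHom`. -/
theorem glift_fHom (x : Lam p) : glift p (fHom p x) = x := by
  induction x using PresentedGroup.induction_on with
  | _ z =>
    induction z using FreeGroup.induction_on with
    | C1 => erw [map_one, map_one]; rfl
    | of g =>
      show glift p (fHom p (PresentedGroup.of g)) = PresentedGroup.of g
      cases g with
      | a =>
        rw [fHom_a, glift_inl]
        show nval (ell p 1) = _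
        rw [ell_one]
        rfl
      | t =>
        rw [fHom_t, glift_inr]
        show cel p 1 0 = _
        rw [cel, zpow_one, zpow_zero, mul_one]
        rfl
      | s =>
        rw [fHom_s, glift_inr]
        show cel p 0 1 = _
        rw [cel, zpow_one, zpow_zero, one_mul]
        rfl
    | inv_of g ih =>
      have key : ∀ y : Lam p, glift p (fHom p y) = y → glift p (fHom p y⁻¹) = y⁻¹ :=
        fun y hy => by rw [map_inv, map_inv, hy]
      exact key (PresentedGroup.mk (LamRel p) (FreeGroup.of g)) ih
    | mul w1 w2 ih1 ih2 =>
      have key : ∀ y z : Lam p, glift p (fHom p y) = y → glift p (fHom p z) = z →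
          glift p (fHom p (y * z)) = y * z :=
        fun y z hy hz => by rw [map_mul, map_mul, hy, hz]
      exact key (PresentedGroup.mk (LamRel p) w1) (PresentedGroup.mk (LamRel p) w2) ih1 ih2

theorem fHom_injective : Function.Injective (fHom p) :=
  Function.LeftInverse.injective (g := glift p) glift_fHom

theorem Msub_decomp {d : Polynomial (ZMod p)} (hd : d ∈ Msub p) :
    ∃ a b : ℕ, d = Polynomial.X ^ a * (1 + Polynomial.X) ^ b := by
  induction hd using Submonoid.closure_induction with
  | mem y hy =>
    rcases hy with rfl | rfl
    · exact ⟨1, 0, by simp⟩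
    · exact ⟨0, 1, by simp⟩
  | one => exact ⟨0, 0, by simp⟩
  | mul a b ha hb iha ihb =>
    obtain ⟨a1, b1, rfl⟩ := iha
    obtain ⟨a2, b2, rfl⟩ := ihb
    exact ⟨a1 + a2, b1 + b2, by ring⟩

/-- The subgroup of `R_p` consisting of those `x` with `inl (ofAdd x)` in the range of `fHom`. -/
noncomputable def Sg (p : ℕ) : AddSubgroup (Rp p) where
  carrier := {x | SemidirectProduct.inl (Multiplicative.ofAdd x) ∈ (fHom p).range}
  zero_mem' := by
    show SemidirectProduct.inl (Multiplicative.ofAdd (0 : Rp p)) ∈ (fHom p).range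
    rw [show Multiplicative.ofAdd (0 : Rp p) = 1 from rfl, map_one]
    exact one_mem _
  add_mem' := by
    intro x y hx hy
    show SemidirectProduct.inl (Multiplicative.ofAdd (x + y)) ∈ (fHom p).range
    rw [show Multiplicative.ofAdd (x + y)
        = Multiplicative.ofAdd x * Multiplicative.ofAdd y from rfl, map_mul]
    exact mul_mem hx hy
  neg_mem' := by
    intro x hx
    show SemidirectProduct.inl (Multiplicative.ofAdd (-x)) ∈ (fHom p).range
    rw [show Multiplicative.ofAdd (-x) = (Multiplicative.ofAdd x)⁻¹ from rfl, map_inv]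
    exact inv_mem hx

theorem inr_mem_range (g : ℤ × ℤ) :
    SemidirectProduct.inr (Multiplicative.ofAdd g) ∈ (fHom p).range := by
  obtain ⟨m, k⟩ := g
  have h1 : (SemidirectProduct.inr (φ := phiOm p) (Multiplicative.ofAdd ((1 : ℤ), (0 : ℤ)))) ^ m
        * (SemidirectProduct.inr (φ := phiOm p) (Multiplicative.ofAdd ((0 : ℤ), (1 : ℤ)))) ^ k
      = SemidirectProduct.inr (Multiplicative.ofAdd ((m : ℤ), (k : ℤ))) := by
    rw [← map_zpow (SemidirectProduct.inr : Multiplicative (ℤ × ℤ) →* Omega p)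
        (Multiplicative.ofAdd ((1 : ℤ), (0 : ℤ))) m,
      ← map_zpow (SemidirectProduct.inr : Multiplicative (ℤ × ℤ) →* Omega p)
        (Multiplicative.ofAdd ((0 : ℤ), (1 : ℤ))) k]
    rw [← map_mul]
    congr 1
    rw [← ofAdd_zsmul, ← ofAdd_zsmul, ← ofAdd_add]
    congr 1
    simp [Prod.ext_iff]
  rw [← h1]
  exact mul_mem (zpow_mem (MonoidHom.mem_range.2 ⟨_, fHom_t⟩) m)
    (zpow_mem (MonoidHom.mem_range.2 ⟨_, fHom_s⟩) k)

theorem Sg_conj (g : ℤ × ℤ) (x : Rp p) (hx : x ∈ Sg p) :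
    ((psiOm p (Multiplicative.ofAdd g) : (Rp p)ˣ) : Rp p) * x ∈ Sg p := by
  show SemidirectProduct.inl
    (Multiplicative.ofAdd (((psiOm p (Multiplicative.ofAdd g) : (Rp p)ˣ) : Rp p) * x))
    ∈ (fHom p).range
  have h1 : (SemidirectProduct.inl
      (Multiplicative.ofAdd (((psiOm p (Multiplicative.ofAdd g) : (Rp p)ˣ) : Rp p) * x)) : Omega p)
      = SemidirectProduct.inr (Multiplicative.ofAdd g)
        * SemidirectProduct.inl (Multiplicative.ofAdd x)
        * (SemidirectProduct.inr (Multiplicative.ofAdd g))⁻¹ := by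
    rw [← map_inv]
    exact SemidirectProduct.inl_aut _ _
  rw [h1]
  exact mul_mem (mul_mem (inr_mem_range g) hx) (inv_mem (inr_mem_range g))

theorem one_mem_Sg : (1 : Rp p) ∈ Sg p := MonoidHom.mem_range.2 ⟨_, fHom_a⟩

theorem algebraMap_mem_Sg (q : Polynomial (ZMod p)) :
    algebraMap (Polynomial (ZMod p)) (Rp p) q ∈ Sg p := by
  induction q using Polynomial.induction_on with
  | C c =>
    obtain ⟨m, rfl⟩ := ZMod.intCast_surjective c
    have h1 : algebraMap (Polynomial (ZMod p)) (Rp p) (Polynomial.C ((m : ℤ) : ZMod p))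
        = m • (1 : Rp p) := by
      rw [map_intCast (Polynomial.C : ZMod p →+* Polynomial (ZMod p)) m,
        map_intCast (algebraMap (Polynomial (ZMod p)) (Rp p)) m, zsmul_eq_mul, mul_one]
    rw [h1]
    exact zsmul_mem one_mem_Sg m
  | add q1 q2 h1 h2 => rw [map_add]; exact add_mem h1 h2
  | monomial n c ih =>
    have h1 : algebraMap (Polynomial (ZMod p)) (Rp p) (Polynomial.C c * Polynomial.X ^ (n + 1))
        = ((psiOm p (Multiplicative.ofAdd ((1 : ℤ), (0 : ℤ))) : (Rp p)ˣ) : Rp p)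
          * algebraMap (Polynomial (ZMod p)) (Rp p) (Polynomial.C c * Polynomial.X ^ n) := by
      rw [psiOm_t, ← map_mul]
      congr 1
      ring
    rw [h1]
    exact Sg_conj _ _ ih

theorem Sg_top (x : Rp p) : x ∈ Sg p := by
  obtain ⟨⟨q, d⟩, rfl⟩ := IsLocalization.mk'_surjective (Msub p) x
  obtain ⟨a, b, hd⟩ := Msub_decomp d.2
  have hspec : IsLocalization.mk' (Rp p) q d
      * algebraMap (Polynomial (ZMod p)) (Rp p) (d : Polynomial (ZMod p))
      = algebraMap (Polynomial (ZMod p)) (Rp p) q := IsLocalization.mk'_spec (Rp p) q d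
  have hdval : algebraMap (Polynomial (ZMod p)) (Rp p) (d : Polynomial (ZMod p))
      = ((uX p ^ (a : ℤ) * uY p ^ (b : ℤ) : (Rp p)ˣ) : Rp p) := by
    rw [hd, map_mul, map_pow, map_pow, Units.val_mul, zpow_natCast, zpow_natCast,
      Units.val_pow_eq_pow_val, Units.val_pow_eq_pow_val]
    rfl
  have huni : (uX p ^ (-(a : ℤ)) * uY p ^ (-(b : ℤ)) : (Rp p)ˣ)
      = (uX p ^ (a : ℤ) * uY p ^ (b : ℤ))⁻¹ := by
    apply eq_inv_of_mul_eq_one_left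
    have hc : Commute (uY p ^ (-(b : ℤ))) (uX p ^ (a : ℤ)) :=
      (Commute.all (uY p) (uX p)).zpow_zpow _ _
    calc uX p ^ (-(a : ℤ)) * uY p ^ (-(b : ℤ)) * (uX p ^ (a : ℤ) * uY p ^ (b : ℤ))
        = uX p ^ (-(a : ℤ)) * (uY p ^ (-(b : ℤ)) * uX p ^ (a : ℤ)) * uY p ^ (b : ℤ) := by
          group
      _ = uX p ^ (-(a : ℤ)) * (uX p ^ (a : ℤ) * uY p ^ (-(b : ℤ))) * uY p ^ (b : ℤ) := by
          rw [hc.eq]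
      _ = 1 := by group
  have hx : IsLocalization.mk' (Rp p) q d
      = ((psiOm p (Multiplicative.ofAdd ((-(a : ℤ)), (-(b : ℤ)))) : (Rp p)ˣ) : Rp p)
        * algebraMap (Polynomial (ZMod p)) (Rp p) q := by
    rw [← hspec, hdval]
    show _ = ((uX p ^ (-(a : ℤ)) * uY p ^ (-(b : ℤ)) : (Rp p)ˣ) : Rp p) * _
    rw [show ((uX p ^ (-(a : ℤ)) * uY p ^ (-(b : ℤ)) : (Rp p)ˣ) : Rp p)
        = (((uX p ^ (a : ℤ) * uY p ^ (b : ℤ))⁻¹ : (Rp p)ˣ) : Rp p) from congrArg Units.val huni]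
    rw [mul_comm (IsLocalization.mk' (Rp p) q d) _, ← mul_assoc]
    rw [← Units.val_mul, inv_mul_cancel, Units.val_one, one_mul]
  show IsLocalization.mk' (Rp p) q d ∈ Sg p
  rw [hx]
  exact Sg_conj _ _ (algebraMap_mem_Sg q)

theorem fHom_surjective : Function.Surjective (fHom p) := by
  intro w
  rw [← SemidirectProduct.inl_left_mul_inr_right w]
  have h1 : SemidirectProduct.inl w.left ∈ (fHom p).range := Sg_top (Multiplicative.toAdd w.left)
  have h2 : SemidirectProduct.inr w.right ∈ (fHom p).range := by
    have h3 := inr_mem_range (p := p) (Multiplicative.toAdd w.right)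
    simpa using h3
  exact mul_mem h1 h2

end B15
end Baumslag


open Baumslag Baumslag.Gen

/-- Baumslag: the homomorphism `Λ_p → Ω_p` sending
`a ↦ (1, (0,0))`, `t ↦ (0, (1,0))`, `s ↦ (0, (0,1))` is well defined and is an
isomorphism. -/
theorem stmt15 (p : ℕ) (hp : p.Prime) :
    ∃ f : Lam p →* Omega p,
      f (PresentedGroup.of a) =
        SemidirectProduct.inl (Multiplicative.ofAdd (1 : Rp p)) ∧
      f (PresentedGroup.of t) =
        SemidirectProduct.inr (Multiplicative.ofAdd ((1 : ℤ), (0 : ℤ))) ∧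
      f (PresentedGroup.of s) =
        SemidirectProduct.inr (Multiplicative.ofAdd ((0 : ℤ), (1 : ℤ))) ∧
      Function.Bijective f := by
  exact ⟨B15.fHom p, B15.fHom_a, B15.fHom_t, B15.fHom_s,
    ⟨B15.fHom_injective, B15.fHom_surjective⟩⟩
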